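/- A word identity u ≈ v holds in the involution monoid (C, *) if and only if: (i) con(u) = con(v), ml(u) = ml(v), lin(u) = lin(v); and (ii) for any x, y ∈ con(u), x ≺_u y iff x ≺_v y. -/

import Mathlib

/-- Variables: `(n, false)` is the plain variable `x_n`, `(n, true)` is the starred
variable `x_n*`. -/
abbrev Var : Type := ℕ × Bool
/-- A word over the variables `X ∪ X*`. -/
abbrev Word : Type := List Var

/-- The starred counterpart of a variable. -/
def vstar (x : Var) : Var := (x.1, !x.2)

def evalVar {M : Type*} [Monoid M] (star : M → M) (φ : ℕ → M) (x : Var) : M :=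
  if x.2 then star (φ x.1) else φ x.1

/-- Evaluation of a word in a monoid `M` equipped with a unary operation `star`,
under a substitution `φ : X → M` (extended by `φ(x*) = φ(x)*`). -/
def evalW {M : Type*} [Monoid M] (star : M → M) (φ : ℕ → M) (w : Word) : M :=
  (w.map (evalVar star φ)).prod

/-- `(M, star)` satisfies the word identity `u ≈ v`. -/
def SatW {M : Type*} [Monoid M] (star : M → M) (u v : Word) : Prop :=
  ∀ φ : ℕ → M, evalW star φ u = evalW star φ v

/-- `Prec u x y` : the last occurrence of `x` precedes the first occurrence of `y`
in `u` (every occurrence of `x` is to the left of every occurrence of `y`). -/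
def Prec (u : Word) (x y : Var) : Prop :=
  ∀ i j : Fin u.length, u.get i = x → u.get j = y → (i : ℕ) < (j : ℕ)

/-- `{xs} ≺_u {ys}` : pairwise `Prec`. -/
def PrecAll (u : Word) (xs ys : List Var) : Prop :=
  ∀ x ∈ xs, ∀ y ∈ ys, Prec u x y

/-- `x ∈ mix(u)` : both `x` and `x*` occur in `u`. -/
def Mix (u : Word) (x : Var) : Prop := x ∈ u ∧ vstar x ∈ u
/-- `x ∈ lin(u)` : `x ∉ mix(u)` and `x` occurs exactly once in `u`. -/
def Lin (u : Word) (x : Var) : Prop := ¬ Mix u x ∧ u.count x = 1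
/-- `x ∈ ml(u)` : `x ∈ mix(u)` and `x` occurs exactly once in `u`. -/
def Ml (u : Word) (x : Var) : Prop := Mix u x ∧ u.count x = 1
/-- The word identity `u ≈ v` is balanced. -/
def BalancedId (u v : Word) : Prop := ∀ x : Var, u.count x = v.count x

/-- Condition (ii) from the characterizations: for any `x, y ∈ con(u)`,
(a) if `x, y ∈ mix(u)` then `{x,y} ≺_u {x*,y*}` iff `{x,y} ≺_v {x*,y*}`;
(b) if `x ∈ mix(u)`, `y ∉ mix(u)` then `x ≺_u {x*,y}` iff `x ≺_v {x*,y}` and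
`{x,y} ≺_u x*` iff `{x,y} ≺_v x*`;
(c) if `x, y ∉ mix(u)` then `x ≺_u y` iff `x ≺_v y`. -/
def CondII (u v : Word) : Prop :=
  ∀ x y : Var, x ∈ u → y ∈ u →
    ((Mix u x ∧ Mix u y →
      (PrecAll u [x, y] [vstar x, vstar y] ↔ PrecAll v [x, y] [vstar x, vstar y])) ∧
     (Mix u x ∧ ¬ Mix u y →
      ((PrecAll u [x] [vstar x, y] ↔ PrecAll v [x] [vstar x, y]) ∧
       (PrecAll u [x, y] [vstar x] ↔ PrecAll v [x, y] [vstar x]))) ∧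
     (¬ Mix u x ∧ ¬ Mix u y → (Prec u x y ↔ Prec v x y)))

open FreeMonoid in
/-- Defining relations of `A_0^1` (letters `0 = a`, `1 = b`):
`a² = a`, `b² = b`, `aba = ba`, `bab = ba`. -/
def A01Rel : FreeMonoid (Fin 2) → FreeMonoid (Fin 2) → Prop := fun u v =>
  (u = of 0 * of 0 ∧ v = of 0) ∨
  (u = of 1 * of 1 ∧ v = of 1) ∨
  (u = of 0 * of 1 * of 0 ∧ v = of 1 * of 0) ∨
  (u = of 1 * of 0 * of 1 ∧ v = of 1 * of 0)

/-- The 5-element monoid `A_0^1 = {1, a, b, ab, ba}`. -/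
abbrev A01 : Type := (conGen A01Rel).Quotient

/-- The involution on words over `{a, b}`: reverse the word and interchange
`a` and `b` (in the quotient it fixes `1`, `ab` and `ba`). -/
def a01WordStar (w : FreeMonoid (Fin 2)) : FreeMonoid (Fin 2) :=
  FreeMonoid.ofList (((FreeMonoid.toList w).map Fin.rev).reverse)

theorem a01WordStar_mul (u v : FreeMonoid (Fin 2)) :
    a01WordStar (u * v) = a01WordStar v * a01WordStar u := by
  simp [a01WordStar]

theorem a01WordStar_wd {u v : FreeMonoid (Fin 2)} (h : conGen A01Rel u v) :
    conGen A01Rel (a01WordStar u) (a01WordStar v) := by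
  have h' : ConGen.Rel A01Rel u v := h
  clear h
  show ConGen.Rel A01Rel (a01WordStar u) (a01WordStar v)
  induction h' with
  | of u v huv =>
    apply ConGen.Rel.of
    rcases huv with ⟨hu,hv⟩|⟨hu,hv⟩|⟨hu,hv⟩|⟨hu,hv⟩ <;> subst hu <;> subst hv
    · exact Or.inr (Or.inl ⟨rfl, rfl⟩)
    · exact Or.inl ⟨rfl, rfl⟩
    · exact Or.inr (Or.inr (Or.inr ⟨rfl, rfl⟩))
    · exact Or.inr (Or.inr (Or.inl ⟨rfl, rfl⟩))
  | refl x => exact ConGen.Rel.refl _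
  | symm _ ih => exact ih.symm
  | trans _ _ ih1 ih2 => exact ih1.trans ih2
  | mul _ _ ih1 ih2 =>
    rw [a01WordStar_mul, a01WordStar_mul]
    exact ConGen.Rel.mul ih2 ih1

/-- The involution `*` of the involution monoid `(A_0^1, *)`. -/
def A01star : A01 → A01 :=
  Quotient.map' a01WordStar fun _ _ h => a01WordStar_wd h

/-- The 25-element monoid `C = A_0^1 × A_0^1`. -/
abbrev Cmon : Type := A01 × A01

/-- The involution `(x, y)* = (y*, x*)` on `C`. -/
def Cstar : Cmon → Cmon := fun p => (A01star p.2, A01star p.1)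

inductive M5 : Type | e | A | B | AB | O
deriving DecidableEq

instance : Fintype M5 := Fintype.ofList [.e, .A, .B, .AB, .O] (fun x => by cases x <;> simp)

-- (mul, monoid, form stuff as before, omitted: assume)
def M5.mul : M5 → M5 → M5
  | .e, y => y
  | x, .e => x
  | .O, _ => .O
  | _, .O => .O
  | .A, .A => .A
  | .A, .B => .AB
  | .A, .AB => .AB
  | .B, .A => .O
  | .B, .B => .B
  | .B, .AB => .O
  | .AB, .A => .O
  | .AB, .B => .AB
  | .AB, .AB => .O

instance : Monoid M5 where
  mul := M5.mul
  one := .e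
  mul_assoc := by decide
  one_mul := by decide
  mul_one := by decide

def hasA (L : List M5) : Bool := L.any fun m => decide (m = .A ∨ m = .AB)
def hasB (L : List M5) : Bool := L.any fun m => decide (m = .B ∨ m = .AB)
def hasBad : List M5 → Bool
  | [] => false
  | x :: L => decide (x = .O) || (decide (x = .B ∨ x = .AB) && hasA L) || hasBad L

def form' (bad a b : Bool) : M5 :=
  if bad then .O else if a then (if b then .AB else .A) else (if b then .B else .e)

def form (L : List M5) : M5 := form' (hasBad L) (hasA L) (hasB L)

theorem prod_eq_form : ∀ L : List M5, L.prod = form L := by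
  intro L
  induction L with
  | nil => decide
  | cons x L ih =>
    rw [List.prod_cons, ih]
    show M5.mul x _ = _
    unfold form
    rw [show hasBad (x :: L) = (decide (x = .O) || (decide (x = .B ∨ x = .AB) && hasA L) || hasBad L) from rfl,
        show hasA (x :: L) = (decide (x = .A ∨ x = .AB) || hasA L) from by simp [hasA],
        show hasB (x :: L) = (decide (x = .B ∨ x = .AB) || hasB L) from by simp [hasB]]
    generalize hasBad L = bad; generalize hasA L = a; generalize hasB L = b
    cases x <;> cases bad <;> cases a <;> cases b <;> rfl

theorem hasA_iff (L : List M5) : hasA L = true ↔ ∃ m ∈ L, m = .A ∨ m = .AB := by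
  simp [hasA, List.any_eq_true]

theorem hasB_iff (L : List M5) : hasB L = true ↔ ∃ m ∈ L, m = .B ∨ m = .AB := by
  simp [hasB, List.any_eq_true]

theorem hasBad_iff (L : List M5) : hasBad L = true ↔
    (.O ∈ L) ∨ ∃ p q : M5, (p = .B ∨ p = .AB) ∧ (q = .A ∨ q = .AB) ∧ [p, q].Sublist L := by
  induction L with
  | nil => simp [hasBad]
  | cons x L ih =>
    show (decide (x = .O) || (decide (x = .B ∨ x = .AB) && hasA L) || hasBad L) = true ↔ _
    simp only [Bool.or_eq_true, Bool.and_eq_true, decide_eq_true_iff, ih, hasA_iff]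
    constructor
    · rintro ((hx | ⟨hxB, m, hm, hmA⟩) | hO | ⟨p, q, hp, hq, hsub⟩)
      · exact Or.inl (by simp [hx])
      · exact Or.inr ⟨x, m, hxB, hmA, (List.singleton_sublist.mpr hm).cons₂ x⟩
      · exact Or.inl (List.mem_cons_of_mem _ hO)
      · exact Or.inr ⟨p, q, hp, hq, hsub.cons x⟩
    · rintro (hO | ⟨p, q, hp, hq, hsub⟩)
      · rcases List.mem_cons.mp hO with h | h
        · exact Or.inl (Or.inl h.symm)
        · exact Or.inr (Or.inl h)
      · rcases hsub with _ | @⟨_, _, _, hsub⟩ | @⟨_, _, _, hsub⟩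
        · exact Or.inr (Or.inr ⟨p, q, hp, hq, by assumption⟩)
        · exact Or.inl (Or.inr ⟨hp, q, List.singleton_sublist.mp hsub, hq⟩)

-- pair sublist characterization
theorem pair_sublist_exists {α : Type*} {x y : α} {w : List α} (h : [x, y].Sublist w) :
    ∃ i j : Fin w.length, (i : ℕ) < (j : ℕ) ∧ w.get i = x ∧ w.get j = y := by
  obtain ⟨f, hf⟩ := List.sublist_iff_exists_fin_orderEmbedding_get_eq.mp h
  exact ⟨f ⟨0, by simp⟩, f ⟨1, by simp⟩, f.strictMono (by simp), (hf ⟨0, by simp⟩).symm,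
    (hf ⟨1, by simp⟩).symm⟩

theorem exists_pair_sublist {α : Type*} {x y : α} {w : List α} {i j : Fin w.length}
    (hij : (i : ℕ) < (j : ℕ)) (hx : w.get i = x) (hy : w.get j = y) : [x, y].Sublist w := by
  subst hx hy
  have : [w.get i, w.get j] = List.map (fun x : Fin w.length => w[x]) [i, j] := by
    simp [List.get_eq_getElem]
  rw [this]
  exact List.map_getElem_sublist (by
    refine List.pairwise_cons.mpr ⟨?_, by simp⟩
    intro a ha
    have : a = j := by simpa using ha
    subst this; exact Fin.lt_def.mpr hij)

theorem pair_sublist_iff_of_ne {α : Type*} [DecidableEq α] {x y : α} {w : List α} (hxy : x ≠ y) :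
    [x, y].Sublist w ↔ x ∈ w ∧ y ∈ w ∧ ¬ (∀ i j : Fin w.length, w.get i = y → w.get j = x → (i:ℕ) < (j:ℕ)) := by
  constructor
  · intro h
    obtain ⟨i, j, hij, hx, hy⟩ := pair_sublist_exists h
    refine ⟨h.subset (by simp), h.subset (by simp), fun hp => ?_⟩
    exact absurd (hp j i hy hx) (by omega)
  · rintro ⟨hx, hy, hp⟩
    push_neg at hp
    obtain ⟨i, j, hiy, hjx, hij⟩ := hp
    have hne : (j:ℕ) ≠ (i:ℕ) := fun h => hxy (by rw [← hjx, ← hiy]; congr 1; exact Fin.ext h)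
    exact exists_pair_sublist (by omega) hjx hiy

theorem pair_sublist_iff_eq (x : Var) (w : Word) : [x, x].Sublist w ↔ 2 ≤ w.count x := by
  rw [show [x, x] = List.replicate 2 x from rfl]
  exact List.replicate_sublist_iff

def evalM5 (f : Var → M5) (w : Word) : M5 := (w.map f).prod

def SatM5 (u v : Word) : Prop := ∀ f : Var → M5, evalM5 f u = evalM5 f v

theorem hasA_map_iff (f : Var → M5) (w : Word) :
    hasA (w.map f) = true ↔ ∃ x ∈ w, f x = .A ∨ f x = .AB := by
  rw [hasA_iff]
  constructor
  · rintro ⟨m, hm, h⟩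
    obtain ⟨x, hx, rfl⟩ := List.mem_map.mp hm
    exact ⟨x, hx, h⟩
  · rintro ⟨x, hx, h⟩
    exact ⟨f x, List.mem_map.mpr ⟨x, hx, rfl⟩, h⟩

theorem hasB_map_iff (f : Var → M5) (w : Word) :
    hasB (w.map f) = true ↔ ∃ x ∈ w, f x = .B ∨ f x = .AB := by
  rw [hasB_iff]
  constructor
  · rintro ⟨m, hm, h⟩
    obtain ⟨x, hx, rfl⟩ := List.mem_map.mp hm
    exact ⟨x, hx, h⟩
  · rintro ⟨x, hx, h⟩
    exact ⟨f x, List.mem_map.mpr ⟨x, hx, rfl⟩, h⟩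

theorem hasBad_map_iff (f : Var → M5) (w : Word) :
    hasBad (w.map f) = true ↔ (∃ x ∈ w, f x = .O) ∨
      ∃ x y : Var, (f x = .B ∨ f x = .AB) ∧ (f y = .A ∨ f y = .AB) ∧ [x, y].Sublist w := by
  rw [hasBad_iff]
  constructor
  · rintro (hO | ⟨p, q, hp, hq, hsub⟩)
    · obtain ⟨x, hx, hfx⟩ := List.mem_map.mp hO
      exact Or.inl ⟨x, hx, hfx⟩
    · obtain ⟨l', hl', heq⟩ := List.sublist_map_iff.mp hsub
      match l', heq with
      | [x, y], heq =>
        simp only [List.map_cons, List.map_nil, List.cons.injEq, and_true] at heq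
        exact Or.inr ⟨x, y, heq.1 ▸ hp, heq.2 ▸ hq, hl'⟩
  · rintro (⟨x, hx, hfx⟩ | ⟨x, y, hfx, hfy, hsub⟩)
    · exact Or.inl (List.mem_map.mpr ⟨x, hx, hfx ▸ rfl⟩)
    · refine Or.inr ⟨f x, f y, hfx, hfy, ?_⟩
      have := hsub.map f
      simpa using this

def Rcond (u v : Word) : Prop :=
  (∀ x : Var, x ∈ u ↔ x ∈ v) ∧ (∀ x : Var, u.count x = 1 ↔ v.count x = 1) ∧
    (∀ x y : Var, x ∈ u → y ∈ u → (Prec u x y ↔ Prec v x y))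

theorem Prec_eq_unfold (u : Word) (x y : Var) :
    Prec u x y = ∀ i j : Fin u.length, u.get i = x → u.get j = y → (i : ℕ) < (j : ℕ) := rfl

theorem sub_transfer {u v : Word} (h : Rcond u v) (x y : Var) :
    [x, y].Sublist u ↔ [x, y].Sublist v := by
  obtain ⟨hcon, hcnt, hprec⟩ := h
  by_cases hxy : x = y
  · subst hxy
    rw [pair_sublist_iff_eq, pair_sublist_iff_eq]
    have h1 : 0 < u.count x ↔ 0 < v.count x := by
      rw [List.count_pos_iff, List.count_pos_iff]; exact hcon x
    have h2 := hcnt x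
    have key : ∀ {a b : ℕ}, (0 < a ↔ 0 < b) → (a = 1 ↔ b = 1) → (2 ≤ a ↔ 2 ≤ b) := by omega
    exact key h1 h2
  · rw [pair_sublist_iff_of_ne hxy, pair_sublist_iff_of_ne hxy]
    rw [← Prec_eq_unfold u y x, ← Prec_eq_unfold v y x]
    constructor
    · rintro ⟨hx, hy, hp⟩
      exact ⟨(hcon x).mp hx, (hcon y).mp hy, fun hq => hp ((hprec y x ((hcon y).mpr ((hcon y).mp hy)) hx).mpr hq)⟩
    · rintro ⟨hx, hy, hp⟩
      refine ⟨(hcon x).mpr hx, (hcon y).mpr hy, fun hq => hp ((hprec y x ((hcon y).mpr hy) ((hcon x).mpr hx)).mp hq)⟩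

theorem evalM5_form (f : Var → M5) (w : Word) :
    evalM5 f w = form' (hasBad (w.map f)) (hasA (w.map f)) (hasB (w.map f)) :=
  prod_eq_form _

theorem Rcond_implies_SatM5 {u v : Word} (h : Rcond u v) : SatM5 u v := by
  intro f
  rw [evalM5_form, evalM5_form]
  obtain ⟨hcon, hcnt, hprec⟩ := h
  have ha : hasA (u.map f) = hasA (v.map f) := by
    rw [Bool.eq_iff_iff, hasA_map_iff, hasA_map_iff]
    exact ⟨fun ⟨x, hx, h⟩ => ⟨x, (hcon x).mp hx, h⟩, fun ⟨x, hx, h⟩ => ⟨x, (hcon x).mpr hx, h⟩⟩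
  have hb : hasB (u.map f) = hasB (v.map f) := by
    rw [Bool.eq_iff_iff, hasB_map_iff, hasB_map_iff]
    exact ⟨fun ⟨x, hx, h⟩ => ⟨x, (hcon x).mp hx, h⟩, fun ⟨x, hx, h⟩ => ⟨x, (hcon x).mpr hx, h⟩⟩
  have hbad : hasBad (u.map f) = hasBad (v.map f) := by
    rw [Bool.eq_iff_iff, hasBad_map_iff, hasBad_map_iff]
    constructor
    · rintro (⟨x, hx, h⟩ | ⟨x, y, h1, h2, h3⟩)
      · exact Or.inl ⟨x, (hcon x).mp hx, h⟩
      · exact Or.inr ⟨x, y, h1, h2, (sub_transfer ⟨hcon, hcnt, hprec⟩ x y).mp h3⟩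
    · rintro (⟨x, hx, h⟩ | ⟨x, y, h1, h2, h3⟩)
      · exact Or.inl ⟨x, (hcon x).mpr hx, h⟩
      · exact Or.inr ⟨x, y, h1, h2, (sub_transfer ⟨hcon, hcnt, hprec⟩ x y).mpr h3⟩
  rw [ha, hb, hbad]

theorem eval_eq_of_all_e {f : Var → M5} {w : Word} (h : ∀ x ∈ w, f x = .e) :
    evalM5 f w = .e := by
  rw [evalM5_form]
  have hA : hasA (w.map f) = false := by
    rw [Bool.eq_false_iff]; intro hc
    obtain ⟨x, hx, hfx⟩ := (hasA_map_iff f w).mp hc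
    rw [h x hx] at hfx; rcases hfx with h' | h' <;> exact M5.noConfusion h'
  have hB : hasB (w.map f) = false := by
    rw [Bool.eq_false_iff]; intro hc
    obtain ⟨x, hx, hfx⟩ := (hasB_map_iff f w).mp hc
    rw [h x hx] at hfx; rcases hfx with h' | h' <;> exact M5.noConfusion h'
  have hBad : hasBad (w.map f) = false := by
    rw [Bool.eq_false_iff]; intro hc
    rcases (hasBad_map_iff f w).mp hc with ⟨x, hx, hfx⟩ | ⟨x, y, hfx, hfy, hsub⟩
    · rw [h x hx] at hfx; exact M5.noConfusion hfx
    · rw [h x (hsub.subset (by simp))] at hfx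
      rcases hfx with h' | h' <;> exact M5.noConfusion h' 
  rw [hA, hB, hBad]; rfl

theorem SatM5_con {u v : Word} (h : SatM5 u v) (x : Var) (hx : x ∈ u) : x ∈ v := by
  by_contra hxv
  set f : Var → M5 := fun y => if y = x then .O else .e with hf
  have heq := h f
  have hu : evalM5 f u = .O := by
    rw [evalM5_form]
    have hb : hasBad (u.map f) = true :=
      (hasBad_map_iff f u).mpr (Or.inl ⟨x, hx, by rw [hf]; exact if_pos rfl⟩)
    rw [hb]; rfl
  have hv : evalM5 f v = .e := by
    refine eval_eq_of_all_e (fun y hy => ?_)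
    rw [hf]
    exact if_neg (fun hh : y = x => hxv (hh ▸ hy))
  rw [hu, hv] at heq
  exact M5.noConfusion heq

theorem SatM5_count {u v : Word} (h : SatM5 u v) (x : Var) (hx : x ∈ u)
    (hc : u.count x = 1) : v.count x = 1 := by
  by_contra hcv
  have hxv : x ∈ v := SatM5_con h x hx
  have h2v : 2 ≤ v.count x := by
    have : 0 < v.count x := List.count_pos_iff.mpr hxv
    omega
  set f : Var → M5 := fun y => if y = x then .AB else .e with hf
  have heq := h f
  have hu : evalM5 f u = .AB := by
    rw [evalM5_form]
    have hA : hasA (u.map f) = true :=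
      (hasA_map_iff f u).mpr ⟨x, hx, Or.inr (by rw [hf]; exact if_pos rfl)⟩
    have hB : hasB (u.map f) = true :=
      (hasB_map_iff f u).mpr ⟨x, hx, Or.inr (by rw [hf]; exact if_pos rfl)⟩
    have hBad : hasBad (u.map f) = false := by
      rw [Bool.eq_false_iff]; intro hcc
      rcases (hasBad_map_iff f u).mp hcc with ⟨y, hy, hfy⟩ | ⟨y, z, hfy, hfz, hsub⟩
      · rw [hf] at hfy; by_cases hyx : y = x <;> simp [hyx] at hfy
      · have hyx : y = x := by
          rw [hf] at hfy; by_cases hyx : y = x; exact hyx; simp [hyx] at hfy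
        have hzx : z = x := by
          rw [hf] at hfz; by_cases hzx : z = x; exact hzx; simp [hzx] at hfz
        rw [hyx, hzx] at hsub
        have := (pair_sublist_iff_eq x u).mp hsub
        omega
    rw [hA, hB, hBad]; rfl
  have hv : evalM5 f v = .O := by
    rw [evalM5_form]
    have hBad : hasBad (v.map f) = true := by
      refine (hasBad_map_iff f v).mpr (Or.inr ⟨x, x, Or.inr ?_, Or.inr ?_, ?_⟩)
      · rw [hf]; exact if_pos rfl
      · rw [hf]; exact if_pos rfl
      · exact (pair_sublist_iff_eq x v).mpr h2v
    rw [hBad]; rfl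
  rw [hu, hv] at heq
  exact M5.noConfusion heq

theorem SatM5_prec {u v : Word} (h : SatM5 u v) (x y : Var) (hx : x ∈ u) (hy : y ∈ u)
    (hp : Prec u x y) : Prec v x y := by
  by_cases hxy : x = y
  · subst hxy
    exfalso
    obtain ⟨i, hi⟩ := List.get_of_mem hx
    exact lt_irrefl _ (hp i i hi hi)
  · by_contra hpv
    have hxv : x ∈ v := SatM5_con h x hx
    have hyv : y ∈ v := SatM5_con h y hy
    have hsubv : [y, x].Sublist v := by
      rw [pair_sublist_iff_of_ne (Ne.symm hxy)]
      exact ⟨hyv, hxv, fun hq => hpv (fun i j h1 h2 => hq i j h1 h2)⟩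
    set f : Var → M5 := fun z => if z = y then .B else if z = x then .A else .e with hf
    have hfy : f y = .B := by rw [hf]; exact if_pos rfl
    have hfx : f x = .A := by rw [hf]; simp [hxy]
    have heq := h f
    have hv : evalM5 f v = .O := by
      rw [evalM5_form]
      have hBad : hasBad (v.map f) = true :=
        (hasBad_map_iff f v).mpr (Or.inr ⟨y, x, Or.inl hfy, Or.inl hfx, hsubv⟩)
      rw [hBad]; rfl
    have hu' : evalM5 f u = .AB := by
      rw [evalM5_form]
      have hA : hasA (u.map f) = true := (hasA_map_iff f u).mpr ⟨x, hx, Or.inl hfx⟩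
      have hB : hasB (u.map f) = true := (hasB_map_iff f u).mpr ⟨y, hy, Or.inl hfy⟩
      have hBad : hasBad (u.map f) = false := by
        rw [Bool.eq_false_iff]; intro hcc
        rcases (hasBad_map_iff f u).mp hcc with ⟨z, hz, hfz⟩ | ⟨z, w, hfz, hfw, hsub⟩
        · rw [hf] at hfz
          by_cases h1 : z = y; · simp [h1] at hfz
          by_cases h2 : z = x <;> simp [h1, h2, hxy] at hfz
        · have hzy : z = y := by
            rw [hf] at hfz
            by_cases h1 : z = y; · exact h1
            by_cases h2 : z = x <;> simp [h1, h2, hxy] at hfz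
          have hwx : w = x := by
            rw [hf] at hfw
            by_cases h1 : w = y; · simp [h1] at hfw
            by_cases h2 : w = x; · exact h2
            simp [h1, h2, hxy] at hfw
          rw [hzy, hwx] at hsub
          obtain ⟨i, j, hij, hgi, hgj⟩ := pair_sublist_exists hsub
          exact absurd (hp j i hgj hgi) (by omega)
      rw [hA, hB, hBad]; rfl
    rw [hu', hv] at heq
    exact M5.noConfusion heq

theorem SatM5_iff_Rcond {u v : Word} : SatM5 u v ↔ Rcond u v := by
  constructor
  · intro h
    have h' : SatM5 v u := fun f => (h f).symm
    refine ⟨fun x => ⟨SatM5_con h x, SatM5_con h' x⟩, fun x => ?_, fun x y hx hy => ?_⟩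
    · by_cases hx : x ∈ u
      · exact ⟨SatM5_count h x hx, SatM5_count h' x (SatM5_con h x hx)⟩
      · have hxv : x ∉ v := fun hc => hx (SatM5_con h' x hc)
        rw [List.count_eq_zero_of_not_mem hx, List.count_eq_zero_of_not_mem hxv]
    · exact ⟨SatM5_prec h x y hx hy, SatM5_prec h' x y (SatM5_con h x hx) (SatM5_con h y hy)⟩
  · exact Rcond_implies_SatM5

def evalA : FreeMonoid (Fin 2) →* M5 := FreeMonoid.lift (fun i => if i = 0 then .A else .B)

theorem A01Rel_le_ker : conGen A01Rel ≤ Con.ker evalA := by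
  apply Con.conGen_le.mpr
  rintro x y (⟨rfl, rfl⟩ | ⟨rfl, rfl⟩ | ⟨rfl, rfl⟩ | ⟨rfl, rfl⟩) <;>
    · rw [Con.ker_rel]
      simp only [map_mul, evalA, FreeMonoid.lift_eval_of]
      decide

def tA : A01 →* M5 := Con.lift _ evalA A01Rel_le_ker

def rep : M5 → FreeMonoid (Fin 2)
  | .e => 1
  | .A => .of 0
  | .B => .of 1
  | .AB => .of 0 * .of 1
  | .O => .of 1 * .of 0

def sA (m : M5) : A01 := (conGen A01Rel).mk' (rep m)

theorem step_lemma (g : Fin 2) (m : M5) :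
    (conGen A01Rel).mk' (.of g) * sA m = sA (evalA (.of g) * m) := by
  have hg : evalA (.of g) = (if g = 0 then .A else .B) := FreeMonoid.lift_eval_of _ _
  rw [sA, sA, ← map_mul, hg]
  fin_cases g <;> cases m <;> refine (Con.eq _).mpr ?_
  all_goals first
  | exact ConGen.Rel.refl _
  | exact ConGen.Rel.of _ _ (Or.inl ⟨rfl, rfl⟩)
  | exact ConGen.Rel.of _ _ (Or.inr (Or.inl ⟨rfl, rfl⟩))
  | exact ConGen.Rel.of _ _ (Or.inr (Or.inr (Or.inl ⟨rfl, rfl⟩)))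
  | exact ConGen.Rel.of _ _ (Or.inr (Or.inr (Or.inr ⟨rfl, rfl⟩)))
  | exact (ConGen.Rel.mul
      (ConGen.Rel.of (FreeMonoid.of 0 * FreeMonoid.of 0) (FreeMonoid.of 0) (Or.inl ⟨rfl, rfl⟩))
      (ConGen.Rel.refl (FreeMonoid.of 1)) :
      ConGen.Rel A01Rel (FreeMonoid.of 0 * FreeMonoid.of 0 * FreeMonoid.of 1)
        (FreeMonoid.of 0 * FreeMonoid.of 1))
  | exact (ConGen.Rel.mul
      (ConGen.Rel.of (FreeMonoid.of 1 * FreeMonoid.of 1) (FreeMonoid.of 1) (Or.inr (Or.inl ⟨rfl, rfl⟩)))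
      (ConGen.Rel.refl (FreeMonoid.of 0)) :
      ConGen.Rel A01Rel (FreeMonoid.of 1 * FreeMonoid.of 1 * FreeMonoid.of 0)
        (FreeMonoid.of 1 * FreeMonoid.of 0))
theorem mk'_eq_sA (w : FreeMonoid (Fin 2)) : (conGen A01Rel).mk' w = sA (evalA w) := by
  induction w using FreeMonoid.recOn with
  | one => rw [map_one, map_one]; rfl
  | of_mul x xs ih => rw [map_mul, map_mul, ih, step_lemma]

theorem tA_sA (m : M5) : tA (sA m) = m := by
  cases m <;> (rw [sA, tA, Con.lift_mk']; decide)

theorem sA_tA (q : A01) : sA (tA q) = q := by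
  refine Con.induction_on q fun w => ?_
  have h1 : tA ((conGen A01Rel).mk' w) = evalA w := Con.lift_mk' _ _
  have h2 : ((conGen A01Rel).mk' w : A01) = (w : A01) := rfl
  rw [← h2, h1, ← mk'_eq_sA]

theorem tA_inj : Function.Injective tA :=
  Function.LeftInverse.injective sA_tA

theorem a01WordStar_invol (w : FreeMonoid (Fin 2)) : a01WordStar (a01WordStar w) = w := by
  simp [a01WordStar, List.map_reverse, List.map_map, Function.comp_def, Fin.rev_rev]

theorem A01star_mk' (w : FreeMonoid (Fin 2)) :
    A01star ((conGen A01Rel).mk' w) = (conGen A01Rel).mk' (a01WordStar w) := rfl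

theorem A01star_invol (q : A01) : A01star (A01star q) = q := by
  refine Con.induction_on q fun w => ?_
  have h2 : ((conGen A01Rel).mk' w : A01) = (w : A01) := rfl
  rw [← h2, A01star_mk', A01star_mk', a01WordStar_invol]

theorem fst_evalW (φ : ℕ → Cmon) (w : Word) :
    (evalW Cstar φ w).1 = (w.map (fun x => (evalVar Cstar φ x).1)).prod := by
  rw [evalW]
  rw [show (List.prod (w.map (evalVar Cstar φ))).1
      = (MonoidHom.fst A01 A01) (List.prod (w.map (evalVar Cstar φ))) from rfl,
    map_list_prod, List.map_map]
  rfl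

theorem snd_evalW (φ : ℕ → Cmon) (w : Word) :
    (evalW Cstar φ w).2 = (w.map (fun x => (evalVar Cstar φ x).2)).prod := by
  rw [evalW]
  rw [show (List.prod (w.map (evalVar Cstar φ))).2
      = (MonoidHom.snd A01 A01) (List.prod (w.map (evalVar Cstar φ))) from rfl,
    map_list_prod, List.map_map]
  rfl

theorem tA_prod (g : Var → A01) (w : Word) :
    tA ((w.map g).prod) = (w.map (fun x => tA (g x))).prod := by
  rw [map_list_prod, List.map_map]; rfl

theorem SatW_iff_SatM5 (u v : Word) : SatW Cstar u v ↔ SatM5 u v := by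
  constructor
  · intro h f
    let φ : ℕ → Cmon := fun n => (sA (f (n, false)), A01star (sA (f (n, true))))
    have key : ∀ x : Var, (evalVar Cstar φ x).1 = sA (f x) := by
      rintro ⟨n, b⟩
      cases b
      · rfl
      · show A01star (A01star (sA (f (n, true)))) = sA (f (n, true))
        exact A01star_invol _
    have he : ∀ w : Word, tA ((evalW Cstar φ w).1) = evalM5 f w := by
      intro w
      rw [fst_evalW, evalM5, tA_prod]
      congr 1
      refine List.map_congr_left fun x _ => ?_
      rw [key x, tA_sA]
    rw [← he u, ← he v, h φ]
  · intro h φ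
    have hfst : ∀ w : Word,
        tA ((evalW Cstar φ w).1) = evalM5 (fun x => tA ((evalVar Cstar φ x).1)) w := by
      intro w; rw [fst_evalW, evalM5, tA_prod]
    have hsnd : ∀ w : Word,
        tA ((evalW Cstar φ w).2) = evalM5 (fun x => tA ((evalVar Cstar φ x).2)) w := by
      intro w; rw [snd_evalW, evalM5, tA_prod]
    refine Prod.ext (tA_inj ?_) (tA_inj ?_)
    · rw [hfst u, hfst v, h]
    · rw [hsnd u, hsnd v, h]

/-- **Theorem 4.6.** A word identity `u ≈ v` holds in the involution monoid
`(C, *) = (A_0^1 × A_0^1, *)` if and only if (i) `con(u) = con(v)`,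
`ml(u) = ml(v)`, `lin(u) = lin(v)`, and (ii) for any `x, y ∈ con(u)`,
`x ≺_u y` iff `x ≺_v y`. -/
theorem stmt_11 (u v : Word) (hu : u ≠ []) (hv : v ≠ []) :
    SatW Cstar u v ↔
      ((∀ x : Var, x ∈ u ↔ x ∈ v) ∧ (∀ x : Var, Ml u x ↔ Ml v x) ∧
        (∀ x : Var, Lin u x ↔ Lin v x)) ∧
      (∀ x y : Var, x ∈ u → y ∈ u → (Prec u x y ↔ Prec v x y)) := by
  rw [SatW_iff_SatM5, SatM5_iff_Rcond]
  constructor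
  · rintro ⟨hcon, hcnt, hprec⟩
    have hmix : ∀ x, Mix u x ↔ Mix v x := fun x => and_congr (hcon x) (hcon (vstar x))
    refine ⟨⟨hcon, fun x => ?_, fun x => ?_⟩, hprec⟩
    · exact and_congr (hmix x) (hcnt x)
    · exact and_congr (not_congr (hmix x)) (hcnt x)
  · rintro ⟨⟨hcon, hml, hlin⟩, hprec⟩
    refine ⟨hcon, fun x => ?_, hprec⟩
    by_cases hx : x ∈ u
    · constructor
      · intro h1
        by_cases hm : Mix u x
        · exact ((hml x).mp ⟨hm, h1⟩).2
        · exact ((hlin x).mp ⟨hm, h1⟩).2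
      · intro h1
        by_cases hm : Mix v x
        · exact ((hml x).mpr ⟨hm, h1⟩).2
        · exact ((hlin x).mpr ⟨hm, h1⟩).2
    · have hxv : x ∉ v := fun hc => hx ((hcon x).mpr hc)
      rw [List.count_eq_zero_of_not_mem hx, List.count_eq_zero_of_not_mem hxv]
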